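/- For all integers p ≥ 1 and q ≥ 1, it holds that s(p,q) ≤ e²·(p+1)·s(p+1,q−1), where s(p,q) = x(p,q)^{−p}·(1−x(p,q))^{−q} with x(p,q) = p/(p+2q) (in particular s(p+1,0) = 1). -/

import Mathlib

/-- `x(p,q) = p / (p + 2q)`. -/
noncomputable def xval (p q : ℕ) : ℝ := (p : ℝ) / ((p : ℝ) + 2 * (q : ℝ))

/-- `s(p,q) = x(p,q)^{-p} · (1 - x(p,q))^{-q}` (real powers; `0^0 = 1`,
so in particular `s(p,0) = 1` for `p ≥ 1`). -/
noncomputable def sval (p q : ℕ) : ℝ :=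
  xval p q ^ (-(p : ℝ)) * (1 - xval p q) ^ (-(q : ℝ))

lemma aux_div (b c e : ℝ) (hb : 0 ≤ b) (hc : 0 < c) :
    (b / c) ^ (-e) = c ^ e * b ^ (-e) := by
  rw [Real.rpow_neg (div_nonneg hb hc.le), Real.div_rpow hb hc.le, inv_div,
    div_eq_mul_inv, Real.rpow_neg hb]

lemma aux_exp (x t : ℝ) (hx : 0 < x) (ht : 0 ≤ t) (htx : t ≤ x) :
    ((x + 1) / x) ^ t ≤ Real.exp 1 := by
  have h1 : (x + 1) / x ≤ Real.exp (1 / x) := by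
    have h := Real.add_one_le_exp (1 / x)
    have h2 : (x + 1) / x = 1 / x + 1 := by
      field_simp
      ring
    rw [h2]; exact h
  calc ((x + 1) / x) ^ t ≤ (Real.exp (1 / x)) ^ t :=
        Real.rpow_le_rpow (by positivity) h1 ht
    _ = Real.exp (1 / x * t) := by rw [← Real.exp_mul]
    _ ≤ Real.exp 1 := by
        apply Real.exp_le_exp.2
        rw [div_mul_eq_mul_div, one_mul, div_le_one hx]
        exact htx

lemma sval_split (p q : ℕ) (hp : 1 ≤ p) :
    sval p q = ((p:ℝ) + 2*(q:ℝ)) ^ ((p:ℝ) + (q:ℝ)) * (p:ℝ) ^ (-(p:ℝ)) *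
      (2*(q:ℝ)) ^ (-(q:ℝ)) := by
  have hp0 : (0:ℝ) < p := by exact_mod_cast hp
  have hn : (0:ℝ) < (p:ℝ) + 2*(q:ℝ) := by positivity
  unfold sval xval
  have h1 : 1 - (p:ℝ)/((p:ℝ)+2*(q:ℝ)) = (2*(q:ℝ))/((p:ℝ)+2*(q:ℝ)) := by
    field_simp
    ring
  rw [h1, aux_div _ _ _ hp0.le hn, aux_div _ _ _ (by positivity) hn,
    Real.rpow_add hn]
  ring

/-- For all integers `p ≥ 1` and `q ≥ 1`,
`s(p,q) ≤ e² · (p+1) · s(p+1, q-1)`; moreover `s(p+1, 0) = 1`. -/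
theorem sval_le (p q : ℕ) (hp : 1 ≤ p) (hq : 1 ≤ q) :
    sval p q ≤ Real.exp 2 * ((p : ℝ) + 1) * sval (p + 1) (q - 1) ∧
      sval (p + 1) 0 = 1 := by
  have hzero : sval (p + 1) 0 = 1 := by
    have hx : xval (p+1) 0 = 1 := by
      unfold xval
      push_cast
      rw [mul_zero, add_zero, div_self (by positivity)]
    unfold sval
    rw [hx]
    simp
  refine ⟨?_, hzero⟩
  obtain ⟨r, rfl⟩ : ∃ r, q = r + 1 := ⟨q - 1, (Nat.succ_pred_eq_of_pos hq).symm⟩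
  have hr1 : r + 1 - 1 = r := rfl
  rw [hr1, sval_split p (r+1) hp, sval_split (p+1) r (Nat.le_add_left 1 p)]
  push_cast
  set P : ℝ := (p:ℝ) with hPdef
  set R : ℝ := (r:ℝ) with hRdef
  have hP : 1 ≤ P := by rw [hPdef]; exact_mod_cast hp
  have hR : 0 ≤ R := by positivity
  have hP0 : 0 < P := by linarith
  have hm : (0:ℝ) < P + 1 + 2*R := by linarith
  -- A : n^s ≤ e * m^s
  have hA : (P + 2*(R+1)) ^ (P + (R+1)) ≤
      Real.exp 1 * (P + 1 + 2*R) ^ (P + (R+1)) := by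
    have hs : 0 ≤ P + (R+1) := by linarith
    have hsm : P + (R+1) ≤ P + 1 + 2*R := by linarith
    have hne : P + 2*(R+1) = (P + 1 + 2*R) + 1 := by ring
    calc (P + 2*(R+1)) ^ (P + (R+1))
        = (((P + 1 + 2*R) + 1)/(P + 1 + 2*R)) ^ (P + (R+1)) *
            (P + 1 + 2*R) ^ (P + (R+1)) := by
          rw [hne, ← Real.mul_rpow (by positivity) hm.le, div_mul_cancel₀ _ hm.ne']
      _ ≤ Real.exp 1 * (P + 1 + 2*R) ^ (P + (R+1)) := by
          apply mul_le_mul_of_nonneg_right (aux_exp _ _ hm hs hsm)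
          positivity
  -- B : P^(-P) ≤ e * (P+1)^(-P)
  have hB' : ((P+1)/P) ^ P ≤ Real.exp 1 := aux_exp P P hP0 hP0.le le_rfl
  have hBeq : ((P+1)/P) ^ P = (P+1) ^ P * P ^ (-P) := by
    have := aux_div (P+1) P (-P) (by positivity) hP0
    rw [neg_neg] at this
    rw [this]; ring
  have key1 : (P+1) ^ P * (P+1) ^ (-P) = 1 := by
    rw [← Real.rpow_add (by positivity)]; simp
  have hB : P ^ (-P) ≤ Real.exp 1 * (P+1) ^ (-P) := by
    have h := mul_le_mul_of_nonneg_right (hBeq ▸ hB')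
      (Real.rpow_nonneg (by positivity : (0:ℝ) ≤ P+1) (-P))
    calc P ^ (-P) = P ^ (-P) * ((P+1) ^ P * (P+1) ^ (-P)) := by rw [key1, mul_one]
      _ = (P+1) ^ P * P ^ (-P) * (P+1) ^ (-P) := by ring
      _ ≤ Real.exp 1 * (P+1) ^ (-P) := h
  -- C : (2(R+1))^(-(R+1)) ≤ (2R)^(-R)
  have hC : (2*(R+1)) ^ (-(R+1)) ≤ (2*R) ^ (-R) := by
    rcases Nat.eq_zero_or_pos r with hr | hr
    · subst hr
      simp only [hRdef, Nat.cast_zero, mul_zero, neg_zero, Real.rpow_zero]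
      rw [zero_add, mul_one]
      rw [Real.rpow_neg (by norm_num), Real.rpow_one]
      norm_num
    · have hR1 : 1 ≤ R := by rw [hRdef]; exact Nat.one_le_cast.mpr hr
      have h1 : (2*R) ^ R ≤ (2*(R+1)) ^ (R+1) := by
        calc (2*R) ^ R ≤ (2*(R+1)) ^ R :=
              Real.rpow_le_rpow (by positivity) (by linarith) (by linarith)
          _ ≤ (2*(R+1)) ^ (R+1) :=
              Real.rpow_le_rpow_of_exponent_le (by linarith) (by linarith)
      rw [Real.rpow_neg (by positivity), Real.rpow_neg (by positivity)]
      exact inv_anti₀ (Real.rpow_pos_of_pos (by linarith) R) h1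
  -- combine
  have hexp2 : Real.exp 2 = Real.exp 1 * Real.exp 1 := by
    rw [← Real.exp_add]; norm_num
  have eqB : (P+1) ^ (-(P+1)) * (P+1) = (P+1) ^ (-P) := by
    nth_rewrite 3 [← Real.rpow_one (P+1)]
    rw [← Real.rpow_add (by linarith)]
    norm_num
  have hs' : (P+1) + R = P + (R+1) := by ring
  calc (P + 2*(R+1)) ^ (P + (R+1)) * P ^ (-P) * (2*(R+1)) ^ (-(R+1))
      ≤ (Real.exp 1 * (P + 1 + 2*R) ^ (P + (R+1))) * (Real.exp 1 * (P+1) ^ (-P)) *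
          (2*R) ^ (-R) := by
        apply mul_le_mul _ hC (Real.rpow_nonneg (by positivity) _) (by positivity)
        exact mul_le_mul hA hB (Real.rpow_nonneg hP0.le _) (by positivity)
    _ = Real.exp 2 * (P + 1) *
          ((P + 1 + 2*R) ^ ((P+1) + R) * (P+1) ^ (-(P+1)) * (2*R) ^ (-R)) := by
        rw [hs', hexp2, ← eqB]; ring
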